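/- arXiv:2003.12959 — 2 statements merged into one kernel-verified Lean document; each statement's English description precedes it below -/
import Mathlib

section
/- For every positive integer n, every set U ⊆ ℤ^n of cardinality 2^(2^(n-1)) + 1 contains three pairwise distinct points u, v, w such that for every coordinate i ∈ {1,…,n} the sequence (u_i, v_i, w_i) is monotone (i.e., u_i ≤ v_i ≤ w_i or u_i ≥ v_i ≥ w_i). -/
open Function Finset

section ES
variable {α : Type*} [LinearOrder α]

/-- Erdős–Szekeres, copied from the Mathlib Archive. -/
private theorem my_erdos_szekeres {r s n : ℕ} {f : Fin n → α} (hn : r * s < n)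
    (hf : Injective f) :
    (∃ t : Finset (Fin n), r < #t ∧ StrictMonoOn f ↑t) ∨
      ∃ t : Finset (Fin n), s < #t ∧ StrictAntiOn f ↑t := by
  let inc_sequences_ending_in : Fin n → Finset (Finset (Fin n)) := fun i =>
    univ.powerset.filter fun t => Finset.max t = i ∧ StrictMonoOn f ↑t
  let dec_sequences_ending_in : Fin n → Finset (Finset (Fin n)) := fun i =>
    univ.powerset.filter fun t => Finset.max t = i ∧ StrictAntiOn f ↑t
  have inc_i : ∀ i, {i} ∈ inc_sequences_ending_in i := fun i => by
    simp [inc_sequences_ending_in, StrictMonoOn]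
  have dec_i : ∀ i, {i} ∈ dec_sequences_ending_in i := fun i => by
    simp [dec_sequences_ending_in, StrictAntiOn]
  let ab' : Fin n → ℕ × ℕ := by
    intro i
    apply
      (max' ((inc_sequences_ending_in i).image card) (Nonempty.image ⟨{i}, inc_i i⟩ _),
        max' ((dec_sequences_ending_in i).image card) (Nonempty.image ⟨{i}, dec_i i⟩ _))
  generalize hab : ab' = ab
  rsuffices ⟨i, hi⟩ : ∃ i, r < (ab i).1 ∨ s < (ab i).2
  · refine Or.imp ?_ ?_ hi
    on_goal 1 =>
      have : (ab i).1 ∈ image card (inc_sequences_ending_in i) := by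
        simp only [← hab]; exact max'_mem _ (Nonempty.image ⟨{i}, inc_i i⟩ _)
    on_goal 2 =>
      have : (ab i).2 ∈ image card (dec_sequences_ending_in i) := by
        simp only [← hab]; exact max'_mem _ (Nonempty.image ⟨{i}, dec_i i⟩ _)
    all_goals
      intro hi
      rw [mem_image] at this
      obtain ⟨t, ht₁, ht₂⟩ := this
      refine ⟨t, by rwa [ht₂], ?_⟩
      rw [mem_filter] at ht₁
      apply ht₁.2.2
  have : Injective ab := by
    simp only [← hab]
    apply Function.Injective.of_lt_imp_ne
    intro i j k q
    injection q with q₁ q₂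
    cases lt_or_gt_of_ne fun _ => ne_of_lt ‹i < j› (hf ‹f i = f j›)
    on_goal 1 =>
      apply ne_of_lt _ q₁
      have : (ab' i).1 ∈ image card (inc_sequences_ending_in i) := by exact max'_mem _ (Nonempty.image ⟨{i}, inc_i i⟩ _)
    on_goal 2 =>
      apply ne_of_lt _ q₂
      have : (ab' i).2 ∈ image card (dec_sequences_ending_in i) := by exact max'_mem _ (Nonempty.image ⟨{i}, dec_i i⟩ _)
    all_goals
      rw [Nat.lt_iff_add_one_le]
      apply le_max'
      rw [mem_image] at this ⊢
      rcases this with ⟨t, ht₁, ht₂⟩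
      rw [mem_filter] at ht₁
      have : t.max = i := by simp only [ht₁.2.1]
      refine ⟨insert j t, ?_, ?_⟩
      · rw [mem_filter]
        refine ⟨?_, ?_, ?_⟩
        · rw [mem_powerset]; apply subset_univ
        · convert max_insert (a := j) (s := t)
          rw [ht₁.2.1, max_eq_left]
          apply WithBot.coe_le_coe.mpr (le_of_lt ‹i < j›)
        simp only [StrictMonoOn, StrictAntiOn, coe_insert, Set.mem_insert_iff, mem_coe]
        rintro x ⟨rfl | _⟩ y ⟨rfl | _⟩ _
        · apply (irrefl _ ‹j < j›).elim
        · exfalso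
          apply not_le_of_gt (_root_.trans ‹i < j› ‹j < y›) (le_max_of_eq ‹y ∈ t› ‹t.max = i›)
        · first
          | apply lt_of_le_of_lt _ ‹f i < f j›
          | apply lt_of_lt_of_le ‹f j < f i› _
          rcases lt_or_eq_of_le (le_max_of_eq ‹x ∈ t› ‹t.max = i›) with (_ | rfl)
          · apply le_of_lt (ht₁.2.2 ‹x ∈ t› (mem_of_max ‹t.max = i›) ‹x < i›)
          · rfl
        · apply ht₁.2.2 ‹x ∈ t› ‹y ∈ t› ‹x < y›
      · rw [card_insert_of_notMem, ht₂]
        intro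
        apply not_le_of_gt ‹i < j› (le_max_of_eq ‹j ∈ t› ‹t.max = i›)
  by_contra! q
  let ran : Finset (ℕ × ℕ) := (range r).image Nat.succ ×ˢ (range s).image Nat.succ
  have : image ab univ ⊆ ran := by
    rintro ⟨x₁, x₂⟩
    simp only [ran, mem_image, exists_prop, mem_range, mem_univ, mem_product, true_and,
      Prod.ext_iff]
    rintro ⟨i, rfl, rfl⟩
    specialize q i
    have z : 1 ≤ (ab i).1 ∧ 1 ≤ (ab i).2 := by
      simp only [← hab]
      constructor <;>
        · apply le_max'
          rw [mem_image]
          exact ⟨{i}, by solve_by_elim, card_singleton i⟩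
    exact ⟨⟨(ab i).1 - 1, by omega⟩, (ab i).2 - 1, by omega⟩
  apply not_le_of_gt hn
  simpa [ran, Nat.succ_injective, card_image_of_injective, ‹Injective ab›] using card_le_card this

/-- Weak Erdős–Szekeres: no injectivity needed, weak monotonicity concluded. -/
private theorem es_weak {m N : ℕ} (f : Fin N → α) (h : m * m < N) :
    ∃ g : Fin (m + 1) → Fin N, StrictMono g ∧
      (Monotone (fun j => f (g j)) ∨ Antitone (fun j => f (g j))) := by
  classical
  let F : Fin N → α ×ₗ Fin N := fun i => toLex (f i, i)
  have hF : Injective F := fun a b hab => by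
    have := congrArg (fun x => (ofLex x).2) hab
    simpa [F] using this
  rcases my_erdos_szekeres (r := m) (s := m) h hF with ⟨t, ht, hmono⟩ | ⟨t, ht, hanti⟩
  · obtain ⟨u, hut, hu⟩ := Finset.exists_subset_card_eq (n := m + 1) ht
    let e := u.orderIsoOfFin hu
    refine ⟨fun j => (e j : Fin N), fun a b hab => e.strictMono hab, Or.inl ?_⟩
    intro a b hab
    rcases eq_or_lt_of_le hab with rfl | hab
    · exact le_rfl
    · have hlt : F (e a : Fin N) < F (e b : Fin N) :=
        hmono (Finset.mem_coe.2 (hut (e a).2)) (Finset.mem_coe.2 (hut (e b).2))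
          (e.strictMono hab)
      rcases Prod.Lex.lt_iff.1 hlt with h' | ⟨h', _⟩
      · exact h'.le
      · exact h'.le
  · obtain ⟨u, hut, hu⟩ := Finset.exists_subset_card_eq (n := m + 1) ht
    let e := u.orderIsoOfFin hu
    refine ⟨fun j => (e j : Fin N), fun a b hab => e.strictMono hab, Or.inr ?_⟩
    intro a b hab
    rcases eq_or_lt_of_le hab with rfl | hab
    · exact le_rfl
    · have hlt : F (e b : Fin N) < F (e a : Fin N) :=
        hanti (Finset.mem_coe.2 (hut (e a).2)) (Finset.mem_coe.2 (hut (e b).2))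
          (e.strictMono hab)
      rcases Prod.Lex.lt_iff.1 hlt with h' | ⟨_, h'⟩
      · exact h'.le
      · exact absurd (e.strictMono hab) (asymm h')

/-- The iterated Erdős–Szekeres step: from `2^(2^k) + 1` points in `ℤ^k` one can
extract a triple monotone in every coordinate. -/
private theorem key : ∀ (k : ℕ) (f : Fin (2 ^ 2 ^ k + 1) → (Fin k → ℤ)),
    ∃ g : Fin 3 → Fin (2 ^ 2 ^ k + 1), StrictMono g ∧ ∀ i : Fin k,
      Monotone (fun j => f (g j) i) ∨ Antitone (fun j => f (g j) i) := by
  intro k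
  induction k with
  | zero =>
    intro f
    refine ⟨fun j => Fin.cast (by norm_num) j, fun a b hab => by simpa using hab, ?_⟩
    exact fun i => i.elim0
  | succ k ih =>
    intro f
    have hlt : 2 ^ 2 ^ k * 2 ^ 2 ^ k < 2 ^ 2 ^ (k + 1) + 1 := by
      rw [← pow_add, ← two_mul, ← pow_succ']
      omega
    obtain ⟨h, hmonoh, hlast⟩ := es_weak (fun j => f j (Fin.last k)) hlt
    obtain ⟨g₀, hg₀, hcoord⟩ := ih (fun j i => f (h j) i.castSucc)
    refine ⟨fun j => h (g₀ j), hmonoh.comp hg₀, ?_⟩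
    intro i
    refine Fin.lastCases ?_ ?_ i
    · rcases hlast with hl | hl
      · exact Or.inl (hl.comp hg₀.monotone)
      · exact Or.inr (hl.comp_monotone hg₀.monotone)
    · intro i
      exact hcoord i

private theorem lex_zero_le {m : ℕ} {x y : Lex (Fin (m + 1) → ℤ)} (h : x < y) :
    ofLex x 0 ≤ ofLex y 0 := by
  have h' : Pi.Lex (· < ·) (@fun _ => (· < ·)) (ofLex x) (ofLex y) := h
  obtain ⟨i, hbefore, hi⟩ := h'
  rcases eq_or_lt_of_le (Fin.zero_le i) with rfl | h0
  · exact hi.le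
  · exact (hbefore 0 h0).le

end ES

/-- Every set of `2^(2^(n-1)) + 1` points of `ℤ^n` contains three pairwise
distinct points which are monotone in every coordinate (an iterated
Erdős–Szekeres argument). -/
theorem exists_coordinatewise_monotone_triple (n : ℕ) (hn : 0 < n)
    (U : Set (Fin n → ℤ)) (hU : U.encard = 2 ^ 2 ^ (n - 1) + 1) :
    ∃ u ∈ U, ∃ v ∈ U, ∃ w ∈ U, u ≠ v ∧ u ≠ w ∧ v ≠ w ∧
      ∀ i, (u i ≤ v i ∧ v i ≤ w i) ∨ (u i ≥ v i ∧ v i ≥ w i) := by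
  classical
  obtain ⟨m, rfl⟩ : ∃ m, n = m + 1 := ⟨n - 1, (Nat.succ_pred_eq_of_pos hn).symm⟩
  simp only [Nat.add_sub_cancel] at hU
  set N := 2 ^ 2 ^ m + 1 with hN
  have hU' : U.encard = (N : ℕ∞) := by rw [hU]; push_cast [hN]; ring
  have hfin : U.Finite := Set.finite_of_encard_eq_coe hU'
  have hcard : hfin.toFinset.card = N := by
    rw [hfin.encard_eq_coe_toFinset_card] at hU'
    exact_mod_cast hU'
  letI : LinearOrder (Lex (Fin (m + 1) → ℤ)) :=
    @Pi.Lex.linearOrder (Fin (m + 1)) (fun _ => ℤ)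
      Fin.instLinearOrder (inferInstanceAs (WellFoundedLT (Fin (m + 1))))
      (fun _ => Int.instLinearOrder)
  -- the points sorted in lexicographic order
  let s : Finset (Lex (Fin (m + 1) → ℤ)) := hfin.toFinset.map (toLex : _ ≃ _).toEmbedding
  have hscard : s.card = N := by rw [Finset.card_map, hcard]
  let e := s.orderIsoOfFin hscard
  let p : Fin N → (Fin (m + 1) → ℤ) := fun j => ofLex (e j : Lex (Fin (m + 1) → ℤ))
  have hpU : ∀ j, p j ∈ U := by
    intro j
    have := (e j).2
    simp only [s, Finset.mem_map, Set.Finite.mem_toFinset] at this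
    obtain ⟨x, hx, hx'⟩ := this
    have : x = p j := by simpa [p] using congrArg ofLex hx'
    rwa [← this]
  have hpinj : Injective p := by
    intro a b hab
    have : (e a : Lex (Fin (m + 1) → ℤ)) = e b := congrArg toLex hab
    exact e.injective (Subtype.ext this)
  have hp0 : ∀ a b : Fin N, a ≤ b → p a 0 ≤ p b 0 := by
    intro a b hab
    have h2 : (e a : Lex (Fin (m + 1) → ℤ)) ≤ e b := Subtype.coe_le_coe.2 (e.monotone hab)
    rcases eq_or_lt_of_le h2 with h3 | h3
    · exact le_of_eq (congrFun (congrArg ofLex h3) 0)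
    · exact lex_zero_le h3
  obtain ⟨g, hg, hcoord⟩ := key m (fun j i => p j i.succ)
  refine ⟨p (g 0), hpU _, p (g 1), hpU _, p (g 2), hpU _, ?_, ?_, ?_, ?_⟩
  · exact fun h => absurd (hpinj h) (hg (by decide : (0 : Fin 3) < 1)).ne
  · exact fun h => absurd (hpinj h) (hg (by decide : (0 : Fin 3) < 2)).ne
  · exact fun h => absurd (hpinj h) (hg (by decide : (1 : Fin 3) < 2)).ne
  · intro i
    refine Fin.cases ?_ ?_ i
    · exact Or.inl ⟨hp0 _ _ (hg (by decide : (0 : Fin 3) < 1)).le,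
        hp0 _ _ (hg (by decide : (1 : Fin 3) < 2)).le⟩
    · intro i
      rcases hcoord i with hmono | hanti
      · exact Or.inl ⟨hmono (by decide : (0 : Fin 3) ≤ 1), hmono (by decide : (1 : Fin 3) ≤ 2)⟩
      · exact Or.inr ⟨hanti (by decide : (0 : Fin 3) ≤ 1), hanti (by decide : (1 : Fin 3) ≤ 2)⟩
end

section
/- For every n ≥ 2, the recursively constructed set X^(n) = {x_1^(n), …, x_{2^(2^(n-1))}^(n)} ⊆ ℤ^n (see context) consists of 2^(2^(n-1)) pairwise distinct points and is a general position set: no three pairwise distinct points u, v, w ∈ X^(n) satisfy d₁(u,w) = d₁(u,v) + d₁(v,w), where d₁(u,v) = ∑_{i=1}^n |u_i − v_i|. -/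
/-- The ℓ1 (graph) distance on the integer lattice ℤ^n. -/
def d1 {n : ℕ} (u v : Fin n → ℤ) : ℤ := ∑ i, |u i - v i|

/-- `gridX n i j` is the `j`-th coordinate `x^(n)_{i,j}` (coordinates indexed
`1,…,n`) of the `i`-th point (indices `1,…,2^(2^(n-1))`) of the recursively
constructed general position set `X^(n) ⊆ ℤ^n`.

For `n = 2`: `x^(2)_1 = (1,2)`, `x^(2)_2 = (2,1)`, `x^(2)_3 = (3,4)`,
`x^(2)_4 = (4,3)`.

For `n ≥ 3`, writing `i = p·2^(2^(n-2)) + r` with `0 ≤ p < 2^(2^(n-2))` and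
`1 ≤ r ≤ 2^(2^(n-2))`:
`x^(n)_{i,1} = i`;
`x^(n)_{i,j} = (x^(n-1)_{p+1,j} − 1)·2^(2^(n-2)) + x^(n-1)_{r,j}` for `2 ≤ j ≤ n−1`;
`x^(n)_{i,n} = x^(n-1)_{p+1,n-1}·2^(2^(n-2)) − x^(n-1)_{r,n-1} + 1`. -/
def gridX : ℕ → ℕ → ℕ → ℤ
  | 0, _, _ => 0
  | 1, i, _ => (i : ℤ)
  | 2, i, j =>
      if j = 2 then (if i % 2 = 1 then (i : ℤ) + 1 else (i : ℤ) - 1) else (i : ℤ)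
  | (n + 3), i, j =>
      let m : ℕ := 2 ^ 2 ^ (n + 1)
      let p : ℕ := (i - 1) / m
      let r : ℕ := (i - 1) % m + 1
      if j = 1 then (i : ℤ)
      else if j = n + 3 then
        gridX (n + 2) (p + 1) (n + 2) * (m : ℤ) - gridX (n + 2) r (n + 2) + 1
      else
        (gridX (n + 2) (p + 1) j - 1) * (m : ℤ) + gridX (n + 2) r j

/-- The point `x_i^(n) ∈ ℤ^n` of the construction (coordinates `x^(n)_{i,1},…,x^(n)_{i,n}`). -/
def gridPt (n i : ℕ) : Fin n → ℤ := fun k => gridX n i (k.val + 1)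

/- ===== auxiliary development ===== -/

def Btw3 (a b c : ℤ) : Prop := (a ≤ b ∧ b ≤ c) ∨ (c ≤ b ∧ b ≤ a)

instance (a b c : ℤ) : Decidable (Btw3 a b c) := by unfold Btw3; infer_instance

lemma btw3_iff (a b c : ℤ) : |a - c| = |a - b| + |b - c| ↔ Btw3 a b c := by
  unfold Btw3
  rw [Int.abs_eq_natAbs, Int.abs_eq_natAbs, Int.abs_eq_natAbs]
  omega

lemma digit_lt {m A A' B B' : ℤ} (hm : 1 ≤ m) (hB : B ≤ m) (hB' : 1 ≤ B') (hA : A < A') :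
    (A - 1) * m + B < (A' - 1) * m + B' := by
  nlinarith [mul_le_mul_of_nonneg_left (by omega : (1:ℤ) ≤ A' - A) (by omega : (0:ℤ) ≤ m)]

lemma top_lt {m A A' B B' : ℤ} (hm : 1 ≤ m) (hB : 1 ≤ B) (hB' : B' ≤ m) (hA : A < A') :
    A * m - B + 1 < A' * m - B' + 1 := by
  nlinarith [mul_le_mul_of_nonneg_left (by omega : (1:ℤ) ≤ A' - A) (by omega : (0:ℤ) ≤ m)]

lemma digit_le {m A A' B B' : ℤ} (hm : 1 ≤ m) (hB : 1 ≤ B) (hBm : B ≤ m)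
    (hB' : 1 ≤ B') (hB'm : B' ≤ m)
    (h : (A - 1) * m + B ≤ (A' - 1) * m + B') : A ≤ A' := by
  by_contra hc
  exact absurd h (not_le.2 (digit_lt hm hB'm hB (by omega)))

lemma btw3_digits {m A1 A2 A3 B1 B2 B3 : ℤ} (hm : 1 ≤ m)
    (h1 : 1 ≤ B1) (h1' : B1 ≤ m) (h2 : 1 ≤ B2) (h2' : B2 ≤ m) (h3 : 1 ≤ B3) (h3' : B3 ≤ m)
    (h : Btw3 ((A1-1)*m+B1) ((A2-1)*m+B2) ((A3-1)*m+B3)) : Btw3 A1 A2 A3 := by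
  rcases h with ⟨ha, hb⟩ | ⟨ha, hb⟩
  · exact Or.inl ⟨digit_le hm h1 h1' h2 h2' ha, digit_le hm h2 h2' h3 h3' hb⟩
  · exact Or.inr ⟨digit_le hm h3 h3' h2 h2' ha, digit_le hm h2 h2' h1 h1' hb⟩

lemma btw3_shift {m A B1 B2 B3 : ℤ}
    (h : Btw3 ((A-1)*m+B1) ((A-1)*m+B2) ((A-1)*m+B3)) : Btw3 B1 B2 B3 := by
  unfold Btw3 at h ⊢
  rcases h with ⟨ha, hb⟩ | ⟨ha, hb⟩
  · exact Or.inl ⟨by linarith, by linarith⟩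
  · exact Or.inr ⟨by linarith, by linarith⟩

lemma gridX_one : ∀ n i, gridX (n + 2) i 1 = (i : ℤ)
  | 0, i => by simp [gridX]
  | (n+1), i => by simp [gridX]

lemma gridX_succ (n i j : ℕ) :
    gridX (n + 3) i j =
      if j = 1 then (i : ℤ)
      else if j = n + 3 then
        gridX (n+2) ((i-1)/2^2^(n+1) + 1) (n+2) * ((2^2^(n+1) : ℕ) : ℤ)
          - gridX (n+2) ((i-1) % 2^2^(n+1) + 1) (n+2) + 1
      else
        (gridX (n+2) ((i-1)/2^2^(n+1) + 1) j - 1) * ((2^2^(n+1) : ℕ) : ℤ)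
          + gridX (n+2) ((i-1) % 2^2^(n+1) + 1) j := rfl

def NN (n : ℕ) : ℕ := 2 ^ 2 ^ (n - 1)

def Good (n : ℕ) : Prop :=
  (∀ i j, 1 ≤ i → i ≤ NN n → 1 ≤ j → j ≤ n →
      1 ≤ gridX n i j ∧ gridX n i j ≤ (NN n : ℤ)) ∧
  (∀ j i i', 1 ≤ j → j ≤ n → 1 ≤ i → i ≤ NN n → 1 ≤ i' → i' ≤ NN n →
      gridX n i j = gridX n i' j → i = i') ∧
  (∀ i1 i2 i3, 1 ≤ i1 → i1 ≤ NN n → 1 ≤ i2 → i2 ≤ NN n → 1 ≤ i3 → i3 ≤ NN n →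
      i1 ≠ i2 → i1 ≠ i3 → i2 ≠ i3 →
      ∃ j, 1 ≤ j ∧ j ≤ n ∧ ¬ Btw3 (gridX n i1 j) (gridX n i2 j) (gridX n i3 j))

lemma good_two : Good 2 := by
  refine ⟨?_, ?_, ?_⟩
  · intro i j h1 h2 h3 h4
    simp only [NN] at h2 ⊢
    norm_num at h2 ⊢
    interval_cases i <;> interval_cases j <;> norm_num [gridX]
  · intro j i i' h1 h2 h3 h4 h5 h6 heq
    simp only [NN] at h4 h6
    norm_num at h4 h6
    interval_cases j <;> interval_cases i <;> interval_cases i' <;> norm_num [gridX] at heq <;> norm_num [gridX] <;> omega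
  · intro i1 i2 i3 a1 b1 a2 b2 a3 b3 n12 n13 n23
    simp only [NN] at b1 b2 b3
    norm_num at b1 b2 b3
    interval_cases i1 <;> interval_cases i2 <;> interval_cases i3 <;>
      first
        | omega
        | (refine ⟨1, by norm_num, by norm_num, ?_⟩; decide)
        | (refine ⟨2, by norm_num, by norm_num, ?_⟩; decide)

lemma low_bounds {m A B : ℤ} (hm : 1 ≤ m) (hA1 : 1 ≤ A) (hA2 : A ≤ m) (hB1 : 1 ≤ B) (hB2 : B ≤ m) :
    1 ≤ (A - 1) * m + B ∧ (A - 1) * m + B ≤ m * m := by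
  constructor
  · nlinarith [mul_nonneg (by linarith : (0:ℤ) ≤ A - 1) (by linarith : (0:ℤ) ≤ m)]
  · nlinarith [mul_le_mul_of_nonneg_right (by linarith : A - 1 ≤ m - 1) (by linarith : (0:ℤ) ≤ m)]

lemma top_bounds {m A B : ℤ} (hm : 1 ≤ m) (hA1 : 1 ≤ A) (hA2 : A ≤ m) (hB1 : 1 ≤ B) (hB2 : B ≤ m) :
    1 ≤ A * m - B + 1 ∧ A * m - B + 1 ≤ m * m := by
  constructor
  · nlinarith [mul_le_mul_of_nonneg_right hA1 (by linarith : (0:ℤ) ≤ m)]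
  · nlinarith [mul_le_mul_of_nonneg_right hA2 (by linarith : (0:ℤ) ≤ m)]

lemma low_inj {m A A' B B' : ℤ} (hm : 1 ≤ m) (hB : 1 ≤ B) (hBm : B ≤ m)
    (hB' : 1 ≤ B') (hB'm : B' ≤ m)
    (h : (A - 1) * m + B = (A' - 1) * m + B') : A = A' ∧ B = B' := by
  have h1 : A = A' :=
    le_antisymm (digit_le hm hB hBm hB' hB'm h.le) (digit_le hm hB' hB'm hB hBm h.ge)
  subst h1
  exact ⟨rfl, by linarith⟩

lemma top_inj {m A A' B B' : ℤ} (hm : 1 ≤ m) (hB : 1 ≤ B) (hBm : B ≤ m)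
    (hB' : 1 ≤ B') (hB'm : B' ≤ m)
    (h : A * m - B + 1 = A' * m - B' + 1) : A = A' ∧ B = B' := by
  rcases lt_trichotomy A A' with hc | hc | hc
  · exact absurd h (ne_of_lt (top_lt hm hB hB'm hc))
  · subst hc; exact ⟨rfl, by linarith⟩
  · exact absurd h.symm (ne_of_lt (top_lt hm hB' hBm hc))

lemma good_step (n : ℕ) (ih : Good (n + 2)) : Good (n + 3) := by
  set M : ℕ := 2 ^ 2 ^ (n + 1) with hMdef
  have hM : 4 ≤ M := by
    have h2 : 2 ≤ 2 ^ (n + 1) := by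
      calc 2 = 2 ^ 1 := rfl
        _ ≤ 2 ^ (n + 1) := Nat.pow_le_pow_right (by norm_num) (by omega)
    calc 4 = 2 ^ 2 := rfl
      _ ≤ 2 ^ 2 ^ (n + 1) := Nat.pow_le_pow_right (by norm_num) h2
  have hmz : (1 : ℤ) ≤ (M : ℤ) := by exact_mod_cast (by omega : 1 ≤ M)
  have hNN2 : NN (n + 2) = M := rfl
  have hNN3 : NN (n + 3) = M * M := by
    show 2 ^ 2 ^ (n + 2) = M * M
    rw [hMdef, ← pow_add]
    congr 1
    rw [pow_succ]; ring
  have hpr : ∀ i : ℕ, 1 ≤ i → M * ((i - 1) / M) + ((i - 1) % M + 1) = i := by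
    intro i h1
    rw [← Nat.add_assoc, Nat.div_add_mod, Nat.sub_add_cancel h1]
  have hieq : ∀ a b : ℕ, 1 ≤ a → 1 ≤ b → (a - 1) / M = (b - 1) / M →
      (a - 1) % M = (b - 1) % M → a = b := by
    intro a b ha hb e1 e2
    have u1 := hpr a ha
    have u2 := hpr b hb
    rw [e1, e2] at u1
    exact u1.symm.trans u2
  have hPle : ∀ i : ℕ, 1 ≤ i → i ≤ M * M → (i - 1) / M + 1 ≤ M := by
    intro i h1 h2
    have h3 : i - 1 < M * M := lt_of_lt_of_le (Nat.sub_lt h1 one_pos) h2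
    exact Nat.succ_le_of_lt (Nat.div_lt_of_lt_mul h3)
  have hRle : ∀ i : ℕ, (i - 1) % M + 1 ≤ M := by
    intro i
    exact Nat.succ_le_of_lt (Nat.mod_lt (i - 1) (show 0 < M by omega))
  have hcoordlow : ∀ i j : ℕ, 1 ≤ i → 1 ≤ j → j ≤ n + 2 →
      gridX (n + 3) i j
        = (gridX (n + 2) ((i - 1) / M + 1) j - 1) * (M : ℤ)
            + gridX (n + 2) ((i - 1) % M + 1) j := by
    intro i j hi hj1 hj2
    rcases eq_or_ne j 1 with rfl | hj
    · rw [gridX_succ, if_pos rfl, gridX_one, gridX_one]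
      have h := hpr i hi
      conv_lhs => rw [← h]
      push_cast
      ring
    · rw [gridX_succ, if_neg hj, if_neg (by omega)]
  have hcoordtop : ∀ i : ℕ,
      gridX (n + 3) i (n + 3)
        = gridX (n + 2) ((i - 1) / M + 1) (n + 2) * (M : ℤ)
            - gridX (n + 2) ((i - 1) % M + 1) (n + 2) + 1 := by
    intro i
    rw [gridX_succ, if_neg (by omega), if_pos rfl]
  obtain ⟨ihb, ihinj, ihgp⟩ := ih
  rw [hNN2] at ihb ihinj ihgp
  have hcast : ((NN (n + 3) : ℕ) : ℤ) = (M : ℤ) * M := by rw [hNN3]; push_cast; ring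
  refine ⟨?_, ?_, ?_⟩
  · -- bounds
    intro i j hi1 hi2 hj1 hj2
    rw [hNN3] at hi2
    rw [hcast]
    rcases eq_or_lt_of_le hj2 with heq | hjlt
    · subst heq
      rw [hcoordtop i]
      obtain ⟨hA1, hA2⟩ := ihb ((i - 1) / M + 1) (n + 2) (Nat.succ_le_succ (Nat.zero_le _)) (hPle i hi1 hi2)
        (by omega) (by omega)
      obtain ⟨hB1, hB2⟩ := ihb ((i - 1) % M + 1) (n + 2) (Nat.succ_le_succ (Nat.zero_le _)) (hRle i)
        (by omega) (by omega)
      exact top_bounds hmz hA1 hA2 hB1 hB2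
    · have hj2' : j ≤ n + 2 := by omega
      rw [hcoordlow i j hi1 hj1 hj2']
      obtain ⟨hA1, hA2⟩ := ihb ((i - 1) / M + 1) j (Nat.succ_le_succ (Nat.zero_le _)) (hPle i hi1 hi2) hj1 hj2'
      obtain ⟨hB1, hB2⟩ := ihb ((i - 1) % M + 1) j (Nat.succ_le_succ (Nat.zero_le _)) (hRle i) hj1 hj2'
      exact low_bounds hmz hA1 hA2 hB1 hB2
  · -- injectivity of each coordinate
    intro j i i' hj1 hj2 hi1 hi2 hi'1 hi'2 heq
    rw [hNN3] at hi2 hi'2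
    rcases eq_or_ne j 1 with rfl | hjne1
    · rw [gridX_one, gridX_one] at heq
      exact_mod_cast heq
    rcases eq_or_ne j (n + 3) with rfl | hjne2
    · rw [hcoordtop i, hcoordtop i'] at heq
      obtain ⟨hB1, hB2⟩ := ihb ((i - 1) % M + 1) (n + 2) (Nat.succ_le_succ (Nat.zero_le _)) (hRle i) (by omega) (by omega)
      obtain ⟨hB'1, hB'2⟩ := ihb ((i' - 1) % M + 1) (n + 2) (Nat.succ_le_succ (Nat.zero_le _)) (hRle i') (by omega) (by omega)
      obtain ⟨e1, e2⟩ := top_inj hmz hB1 hB2 hB'1 hB'2 heq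
      have p1 := ihinj (n + 2) _ _ (by omega) (le_refl _) (Nat.succ_le_succ (Nat.zero_le _)) (hPle i hi1 hi2)
        (Nat.succ_le_succ (Nat.zero_le _)) (hPle i' hi'1 hi'2) e1
      have p2 := ihinj (n + 2) _ _ (by omega) (le_refl _) (Nat.succ_le_succ (Nat.zero_le _)) (hRle i)
        (Nat.succ_le_succ (Nat.zero_le _)) (hRle i') e2
      exact hieq i i' hi1 hi'1 (Nat.succ_injective p1) (Nat.succ_injective p2)
    · have hj2' : j ≤ n + 2 := by omega
      rw [hcoordlow i j hi1 hj1 hj2', hcoordlow i' j hi'1 hj1 hj2'] at heq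
      obtain ⟨hB1, hB2⟩ := ihb ((i - 1) % M + 1) j (Nat.succ_le_succ (Nat.zero_le _)) (hRle i) hj1 hj2'
      obtain ⟨hB'1, hB'2⟩ := ihb ((i' - 1) % M + 1) j (Nat.succ_le_succ (Nat.zero_le _)) (hRle i') hj1 hj2'
      obtain ⟨e1, e2⟩ := low_inj hmz hB1 hB2 hB'1 hB'2 heq
      have p1 := ihinj j _ _ hj1 hj2' (Nat.succ_le_succ (Nat.zero_le _)) (hPle i hi1 hi2)
        (Nat.succ_le_succ (Nat.zero_le _)) (hPle i' hi'1 hi'2) e1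
      have p2 := ihinj j _ _ hj1 hj2' (Nat.succ_le_succ (Nat.zero_le _)) (hRle i) (Nat.succ_le_succ (Nat.zero_le _)) (hRle i') e2
      exact hieq i i' hi1 hi'1 (Nat.succ_injective p1) (Nat.succ_injective p2)
  · -- general position
    intro i1 i2 i3 hi11 hi12 hi21 hi22 hi31 hi32 hne12 hne13 hne23
    rw [hNN3] at hi12 hi22 hi32
    by_contra hcon
    push_neg at hcon
    have hlow : ∀ j, 1 ≤ j → j ≤ n + 2 →
        Btw3 ((gridX (n + 2) ((i1 - 1) / M + 1) j - 1) * (M : ℤ) + gridX (n + 2) ((i1 - 1) % M + 1) j)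
             ((gridX (n + 2) ((i2 - 1) / M + 1) j - 1) * (M : ℤ) + gridX (n + 2) ((i2 - 1) % M + 1) j)
             ((gridX (n + 2) ((i3 - 1) / M + 1) j - 1) * (M : ℤ) + gridX (n + 2) ((i3 - 1) % M + 1) j) := by
      intro j hj1 hj2
      have h := hcon j hj1 (by omega)
      rwa [hcoordlow i1 j hi11 hj1 hj2, hcoordlow i2 j hi21 hj1 hj2,
        hcoordlow i3 j hi31 hj1 hj2] at h
    have htop : Btw3
        (gridX (n + 2) ((i1 - 1) / M + 1) (n + 2) * (M : ℤ) - gridX (n + 2) ((i1 - 1) % M + 1) (n + 2) + 1)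
        (gridX (n + 2) ((i2 - 1) / M + 1) (n + 2) * (M : ℤ) - gridX (n + 2) ((i2 - 1) % M + 1) (n + 2) + 1)
        (gridX (n + 2) ((i3 - 1) / M + 1) (n + 2) * (M : ℤ) - gridX (n + 2) ((i3 - 1) % M + 1) (n + 2) + 1) := by
      have h := hcon (n + 3) (by omega) (le_refl _)
      rwa [hcoordtop i1, hcoordtop i2, hcoordtop i3] at h
    have hA : ∀ j, 1 ≤ j → j ≤ n + 2 →
        Btw3 (gridX (n + 2) ((i1 - 1) / M + 1) j) (gridX (n + 2) ((i2 - 1) / M + 1) j)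
          (gridX (n + 2) ((i3 - 1) / M + 1) j) := by
      intro j hj1 hj2
      obtain ⟨b11, b12⟩ := ihb ((i1 - 1) % M + 1) j (Nat.succ_le_succ (Nat.zero_le _)) (hRle i1) hj1 hj2
      obtain ⟨b21, b22⟩ := ihb ((i2 - 1) % M + 1) j (Nat.succ_le_succ (Nat.zero_le _)) (hRle i2) hj1 hj2
      obtain ⟨b31, b32⟩ := ihb ((i3 - 1) % M + 1) j (Nat.succ_le_succ (Nat.zero_le _)) (hRle i3) hj1 hj2
      exact btw3_digits hmz b11 b12 b21 b22 b31 b32 (hlow j hj1 hj2)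
    by_cases h13 : (i1 - 1) / M = (i3 - 1) / M
    · -- same first and third block
      have h12 : (i1 - 1) / M = (i2 - 1) / M := by
        have hb1 := hA 1 (by omega) (by omega)
        rw [gridX_one, gridX_one, gridX_one] at hb1
        rw [h13] at hb1
        unfold Btw3 at hb1
        have hcc : (((i2 - 1) / M + 1 : ℕ) : ℤ) = (((i3 - 1) / M + 1 : ℕ) : ℤ) := by
          rcases hb1 with ⟨x, y⟩ | ⟨x, y⟩ <;> linarith
        have hcc2 := Nat.succ_injective (Nat.cast_inj.mp hcc)
        rw [h13, hcc2]
      obtain ⟨j, hj1, hj2, hnb⟩ := ihgp ((i1 - 1) % M + 1) ((i2 - 1) % M + 1) ((i3 - 1) % M + 1)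
        (Nat.succ_le_succ (Nat.zero_le _)) (hRle i1) (Nat.succ_le_succ (Nat.zero_le _)) (hRle i2) (Nat.succ_le_succ (Nat.zero_le _)) (hRle i3)
        (fun e => hne12 (hieq i1 i2 hi11 hi21 h12 (Nat.succ_injective e)))
        (fun e => hne13 (hieq i1 i3 hi11 hi31 h13 (Nat.succ_injective e)))
        (fun e => hne23 (hieq i2 i3 hi21 hi31 (h12.symm.trans h13) (Nat.succ_injective e)))
      apply hnb
      have hb := hlow j hj1 hj2
      rw [show (i2 - 1) / M = (i1 - 1) / M from h12.symm,
        show (i3 - 1) / M = (i1 - 1) / M from h13.symm] at hb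
      exact btw3_shift hb
    by_cases h12 : (i1 - 1) / M = (i2 - 1) / M
    · -- p1 = p2 ≠ p3
      obtain ⟨hB11, hB12⟩ := ihb ((i1 - 1) % M + 1) (n + 2) (Nat.succ_le_succ (Nat.zero_le _)) (hRle i1) (by omega) (by omega)
      obtain ⟨hB21, hB22⟩ := ihb ((i2 - 1) % M + 1) (n + 2) (Nat.succ_le_succ (Nat.zero_le _)) (hRle i2) (by omega) (by omega)
      obtain ⟨hB31, hB32⟩ := ihb ((i3 - 1) % M + 1) (n + 2) (Nat.succ_le_succ (Nat.zero_le _)) (hRle i3) (by omega) (by omega)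
      have hb := hlow (n + 2) (by omega) (le_refl _)
      have ht := htop
      rw [show (i2 - 1) / M = (i1 - 1) / M from h12.symm] at hb ht
      rcases lt_trichotomy (gridX (n + 2) ((i1 - 1) / M + 1) (n + 2))
          (gridX (n + 2) ((i3 - 1) / M + 1) (n + 2)) with hlt | heq | hgt
      · have hltv1 := digit_lt (A := gridX (n + 2) ((i1 - 1) / M + 1) (n + 2))
          (A' := gridX (n + 2) ((i3 - 1) / M + 1) (n + 2)) hmz hB22 hB31 hlt
        have hltv2 := top_lt (A := gridX (n + 2) ((i1 - 1) / M + 1) (n + 2))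
          (A' := gridX (n + 2) ((i3 - 1) / M + 1) (n + 2)) hmz hB21 hB32 hlt
        have k1 : gridX (n + 2) ((i1 - 1) % M + 1) (n + 2) ≤ gridX (n + 2) ((i2 - 1) % M + 1) (n + 2) := by
          rcases hb with ⟨x, y⟩ | ⟨x, y⟩ <;> linarith
        have k2 : gridX (n + 2) ((i2 - 1) % M + 1) (n + 2) ≤ gridX (n + 2) ((i1 - 1) % M + 1) (n + 2) := by
          rcases ht with ⟨x, y⟩ | ⟨x, y⟩ <;> linarith
        have e := ihinj (n + 2) _ _ (by omega) (le_refl _) (Nat.succ_le_succ (Nat.zero_le _)) (hRle i1)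
          (Nat.succ_le_succ (Nat.zero_le _)) (hRle i2) (le_antisymm k1 k2)
        exact hne12 (hieq i1 i2 hi11 hi21 h12 (Nat.succ_injective e))
      · have e := ihinj (n + 2) _ _ (by omega) (le_refl _) (Nat.succ_le_succ (Nat.zero_le _)) (hPle i1 hi11 hi12)
          (Nat.succ_le_succ (Nat.zero_le _)) (hPle i3 hi31 hi32) heq
        exact h13 (Nat.succ_injective e)
      · have hltv1 := digit_lt (A := gridX (n + 2) ((i3 - 1) / M + 1) (n + 2))
          (A' := gridX (n + 2) ((i1 - 1) / M + 1) (n + 2)) hmz hB32 hB21 hgt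
        have hltv2 := top_lt (A := gridX (n + 2) ((i3 - 1) / M + 1) (n + 2))
          (A' := gridX (n + 2) ((i1 - 1) / M + 1) (n + 2)) hmz hB31 hB22 hgt
        have k1 : gridX (n + 2) ((i2 - 1) % M + 1) (n + 2) ≤ gridX (n + 2) ((i1 - 1) % M + 1) (n + 2) := by
          rcases hb with ⟨x, y⟩ | ⟨x, y⟩ <;> linarith
        have k2 : gridX (n + 2) ((i1 - 1) % M + 1) (n + 2) ≤ gridX (n + 2) ((i2 - 1) % M + 1) (n + 2) := by
          rcases ht with ⟨x, y⟩ | ⟨x, y⟩ <;> linarith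
        have e := ihinj (n + 2) _ _ (by omega) (le_refl _) (Nat.succ_le_succ (Nat.zero_le _)) (hRle i1)
          (Nat.succ_le_succ (Nat.zero_le _)) (hRle i2) (le_antisymm k2 k1)
        exact hne12 (hieq i1 i2 hi11 hi21 h12 (Nat.succ_injective e))
    by_cases h23 : (i2 - 1) / M = (i3 - 1) / M
    · -- p2 = p3 ≠ p1
      obtain ⟨hB11, hB12⟩ := ihb ((i1 - 1) % M + 1) (n + 2) (Nat.succ_le_succ (Nat.zero_le _)) (hRle i1) (by omega) (by omega)
      obtain ⟨hB21, hB22⟩ := ihb ((i2 - 1) % M + 1) (n + 2) (Nat.succ_le_succ (Nat.zero_le _)) (hRle i2) (by omega) (by omega)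
      obtain ⟨hB31, hB32⟩ := ihb ((i3 - 1) % M + 1) (n + 2) (Nat.succ_le_succ (Nat.zero_le _)) (hRle i3) (by omega) (by omega)
      have hb := hlow (n + 2) (by omega) (le_refl _)
      have ht := htop
      rw [show (i3 - 1) / M = (i2 - 1) / M from h23.symm] at hb ht
      rcases lt_trichotomy (gridX (n + 2) ((i1 - 1) / M + 1) (n + 2))
          (gridX (n + 2) ((i2 - 1) / M + 1) (n + 2)) with hlt | heq | hgt
      · have hltv1 := digit_lt (A := gridX (n + 2) ((i1 - 1) / M + 1) (n + 2))
          (A' := gridX (n + 2) ((i2 - 1) / M + 1) (n + 2)) hmz hB12 hB21 hlt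
        have hltv2 := top_lt (A := gridX (n + 2) ((i1 - 1) / M + 1) (n + 2))
          (A' := gridX (n + 2) ((i2 - 1) / M + 1) (n + 2)) hmz hB11 hB22 hlt
        have k1 : gridX (n + 2) ((i2 - 1) % M + 1) (n + 2) ≤ gridX (n + 2) ((i3 - 1) % M + 1) (n + 2) := by
          rcases hb with ⟨x, y⟩ | ⟨x, y⟩ <;> linarith
        have k2 : gridX (n + 2) ((i3 - 1) % M + 1) (n + 2) ≤ gridX (n + 2) ((i2 - 1) % M + 1) (n + 2) := by
          rcases ht with ⟨x, y⟩ | ⟨x, y⟩ <;> linarith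
        have e := ihinj (n + 2) _ _ (by omega) (le_refl _) (Nat.succ_le_succ (Nat.zero_le _)) (hRle i2)
          (Nat.succ_le_succ (Nat.zero_le _)) (hRle i3) (le_antisymm k1 k2)
        exact hne23 (hieq i2 i3 hi21 hi31 h23 (Nat.succ_injective e))
      · have e := ihinj (n + 2) _ _ (by omega) (le_refl _) (Nat.succ_le_succ (Nat.zero_le _)) (hPle i1 hi11 hi12)
          (Nat.succ_le_succ (Nat.zero_le _)) (hPle i2 hi21 hi22) heq
        exact h12 (Nat.succ_injective e)
      · have hltv1 := digit_lt (A := gridX (n + 2) ((i2 - 1) / M + 1) (n + 2))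
          (A' := gridX (n + 2) ((i1 - 1) / M + 1) (n + 2)) hmz hB22 hB11 hgt
        have hltv2 := top_lt (A := gridX (n + 2) ((i2 - 1) / M + 1) (n + 2))
          (A' := gridX (n + 2) ((i1 - 1) / M + 1) (n + 2)) hmz hB21 hB12 hgt
        have k1 : gridX (n + 2) ((i3 - 1) % M + 1) (n + 2) ≤ gridX (n + 2) ((i2 - 1) % M + 1) (n + 2) := by
          rcases hb with ⟨x, y⟩ | ⟨x, y⟩ <;> linarith
        have k2 : gridX (n + 2) ((i2 - 1) % M + 1) (n + 2) ≤ gridX (n + 2) ((i3 - 1) % M + 1) (n + 2) := by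
          rcases ht with ⟨x, y⟩ | ⟨x, y⟩ <;> linarith
        have e := ihinj (n + 2) _ _ (by omega) (le_refl _) (Nat.succ_le_succ (Nat.zero_le _)) (hRle i2)
          (Nat.succ_le_succ (Nat.zero_le _)) (hRle i3) (le_antisymm k2 k1)
        exact hne23 (hieq i2 i3 hi21 hi31 h23 (Nat.succ_injective e))
    · -- all blocks distinct
      obtain ⟨j, hj1, hj2, hnb⟩ := ihgp ((i1 - 1) / M + 1) ((i2 - 1) / M + 1) ((i3 - 1) / M + 1)
        (Nat.succ_le_succ (Nat.zero_le _)) (hPle i1 hi11 hi12) (Nat.succ_le_succ (Nat.zero_le _)) (hPle i2 hi21 hi22)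
        (Nat.succ_le_succ (Nat.zero_le _)) (hPle i3 hi31 hi32)
        (fun e => h12 (Nat.succ_injective e)) (fun e => h13 (Nat.succ_injective e))
        (fun e => h23 (Nat.succ_injective e))
      exact hnb (hA j hj1 hj2)

lemma good_all : ∀ n : ℕ, Good (n + 2) := by
  intro n
  induction n with
  | zero => exact good_two
  | succ k ihk => exact good_step k ihk

/-- For every `n ≥ 2`, the set `X^(n) = {x_1^(n), …, x_{2^(2^(n-1))}^(n)}`
consists of `2^(2^(n-1))` pairwise distinct points of `ℤ^n` and is a general
position set: no three pairwise distinct of its points lie on a common geodesic. -/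
theorem gridX_is_general_position (n : ℕ) (hn : 2 ≤ n) :
    (gridPt n '' Set.Icc 1 (2 ^ 2 ^ (n - 1))).encard = 2 ^ 2 ^ (n - 1) ∧
    ∀ u ∈ gridPt n '' Set.Icc 1 (2 ^ 2 ^ (n - 1)),
      ∀ v ∈ gridPt n '' Set.Icc 1 (2 ^ 2 ^ (n - 1)),
        ∀ w ∈ gridPt n '' Set.Icc 1 (2 ^ 2 ^ (n - 1)),
          u ≠ v → u ≠ w → v ≠ w → d1 u w ≠ d1 u v + d1 v w := by
  obtain ⟨k, rfl⟩ : ∃ k, n = k + 2 := ⟨n - 2, by omega⟩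
  obtain ⟨gb, ginj, ggp⟩ := good_all k
  have hptinj : Set.InjOn (gridPt (k + 2)) (Set.Icc 1 (2 ^ 2 ^ (k + 2 - 1))) := by
    intro a ha b hb hab
    have h0 : gridPt (k + 2) a ⟨0, by omega⟩ = gridPt (k + 2) b ⟨0, by omega⟩ := by rw [hab]
    simp only [gridPt] at h0
    norm_num at h0
    rw [gridX_one, gridX_one] at h0
    exact_mod_cast h0
  constructor
  · rw [Set.InjOn.encard_image hptinj]
    rw [← Finset.coe_Icc, Set.encard_coe_eq_coe_finsetCard, Nat.card_Icc]
    norm_num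
  · rintro u ⟨i1, hi1, rfl⟩ v ⟨i2, hi2, rfl⟩ w ⟨i3, hi3, rfl⟩ huv huw hvw heq
    rw [Set.mem_Icc] at hi1 hi2 hi3
    have hne12 : i1 ≠ i2 := fun e => huv (by rw [e])
    have hne13 : i1 ≠ i3 := fun e => huw (by rw [e])
    have hne23 : i2 ≠ i3 := fun e => hvw (by rw [e])
    have hle : ∀ kk : Fin (k + 2), kk ∈ Finset.univ →
        |gridPt (k+2) i1 kk - gridPt (k+2) i3 kk|
          ≤ |gridPt (k+2) i1 kk - gridPt (k+2) i2 kk|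
            + |gridPt (k+2) i2 kk - gridPt (k+2) i3 kk| :=
      fun kk _ => abs_sub_le _ _ _
    have hsum : (∑ kk, |gridPt (k+2) i1 kk - gridPt (k+2) i3 kk|)
        = ∑ kk, (|gridPt (k+2) i1 kk - gridPt (k+2) i2 kk|
            + |gridPt (k+2) i2 kk - gridPt (k+2) i3 kk|) := by
      rw [Finset.sum_add_distrib]
      exact heq
    have hterm := (Finset.sum_eq_sum_iff_of_le hle).mp hsum
    have hbtw : ∀ kk : Fin (k + 2),
        Btw3 (gridPt (k+2) i1 kk) (gridPt (k+2) i2 kk) (gridPt (k+2) i3 kk) :=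
      fun kk => (btw3_iff _ _ _).mp (hterm kk (Finset.mem_univ kk))
    obtain ⟨j, hj1, hj2, hnb⟩ := ggp i1 i2 i3 hi1.1 hi1.2 hi2.1 hi2.2 hi3.1 hi3.2
      hne12 hne13 hne23
    apply hnb
    have h := hbtw ⟨j - 1, by omega⟩
    simp only [gridPt] at h
    rw [show j - 1 + 1 = j from by omega] at h
    exact h
end
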